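/- Let f : ℝᵈ → ℝ be β-smooth (∇f is β-Lipschitz) and let C be a nonempty closed convex set. Fix x ∈ C and let x⁺ = P_C(x + (1/β)∇f(x)), with G = β(x⁺ − x). If ‖G‖₂ ≤ ε, then for every δ with x⁺ + δ ∈ C and ‖δ‖₂ ≤ 1, it holds that δᵀ∇f(x⁺) ≤ 2ε. -/

import Mathlib

/-- If the gradient mapping `G = β(x⁺ − x)` of a projected gradient step on a globally
`β`-smooth `f` has norm at most `ε`, then `x⁺` is an approximate first-order stationary
point of `f` over `C`: every feasible direction `δ` of norm at most 1 satisfies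
`⟪δ, ∇f(x⁺)⟫ ≤ 2ε`. -/
theorem small_gradient_mapping_implies_stationary {d : ℕ}
    (C : Set (EuclideanSpace ℝ (Fin d)))
    (hCne : C.Nonempty) (hCcl : IsClosed C) (hCcv : Convex ℝ C)
    (f : EuclideanSpace ℝ (Fin d) → ℝ) (g : EuclideanSpace ℝ (Fin d) → EuclideanSpace ℝ (Fin d))
    (hgrad : ∀ x, HasGradientAt f (g x) x)
    (β : ℝ) (hβ : 0 < β)
    (hLip : ∀ x y, ‖g x - g y‖ ≤ β * ‖x - y‖)
    (x xplus : EuclideanSpace ℝ (Fin d)) (hx : x ∈ C)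
    (hxplusC : xplus ∈ C)
    (hproj : ∀ z ∈ C, dist (x + (1/β) • g x) xplus ≤ dist (x + (1/β) • g x) z)
    (ε : ℝ) (hε : ‖β • (xplus - x)‖ ≤ ε) :
    ∀ δ : EuclideanSpace ℝ (Fin d), xplus + δ ∈ C → ‖δ‖ ≤ 1 →
      (inner ℝ δ (g xplus) : ℝ) ≤ 2 * ε := by
  intro δ hδC hδ1
  haveI : Nonempty C := hCne.to_subtype
  set u := x + (1/β) • g x with hu
  have hbdd : BddBelow (Set.range fun w : C => ‖u - (w : EuclideanSpace ℝ (Fin d))‖) := by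
    refine ⟨0, ?_⟩
    rintro b ⟨w, rfl⟩
    exact norm_nonneg _
  have hmin : ‖u - xplus‖ = ⨅ w : C, ‖u - w‖ := by
    refine le_antisymm (le_ciInf fun w => ?_) (ciInf_le hbdd ⟨xplus, hxplusC⟩)
    simpa [dist_eq_norm] using hproj w w.2
  have hVI := (norm_eq_iInf_iff_real_inner_le_zero hCcv hxplusC).mp hmin
  have h1 : (inner ℝ (u - xplus) δ : ℝ) ≤ 0 := by
    have := hVI (xplus + δ) hδC
    simpa using this
  have key : (inner ℝ (g x) δ : ℝ) - inner ℝ (β • (xplus - x)) δ = β * inner ℝ (u - xplus) δ := by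
    rw [hu]
    simp only [inner_sub_left, inner_add_left, inner_smul_left, RCLike.conj_to_real,
      real_inner_comm]
    field_simp
    ring
  have h2 : (inner ℝ (g x) δ : ℝ) ≤ inner ℝ (β • (xplus - x)) δ := by nlinarith
  have h3 : (inner ℝ (β • (xplus - x)) δ : ℝ) ≤ ε := by
    calc (inner ℝ (β • (xplus - x)) δ : ℝ) ≤ ‖β • (xplus - x)‖ * ‖δ‖ := real_inner_le_norm _ _
    _ ≤ ε * 1 := by
        apply mul_le_mul hε hδ1 (norm_nonneg _) ((norm_nonneg _).trans hε)
    _ = ε := mul_one ε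
  have h4 : (inner ℝ (g xplus - g x) δ : ℝ) ≤ ε := by
    calc (inner ℝ (g xplus - g x) δ : ℝ) ≤ ‖g xplus - g x‖ * ‖δ‖ := real_inner_le_norm _ _
    _ ≤ (β * ‖xplus - x‖) * 1 := by
        apply mul_le_mul (hLip _ _) hδ1 (norm_nonneg _)
          (by positivity)
    _ = ‖β • (xplus - x)‖ := by rw [norm_smul, Real.norm_eq_abs, abs_of_pos hβ, mul_one]
    _ ≤ ε := hε
  have : (inner ℝ δ (g xplus) : ℝ) = inner ℝ (g x) δ + inner ℝ (g xplus - g x) δ := by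
    rw [real_inner_comm]
    simp [inner_sub_left]
  linarith
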